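/- arXiv:1003.4001 — 3 statements merged into one kernel-verified Lean document; each statement's English description precedes it below -/
import Mathlib

section
/- For every non-negative integer r and every positive integer m, the number 2^m * (509203 + 11184810*r) - 1 is composite (not prime). -/
lemma riesel_aux (r m p : ℕ) (hp2 : 2 ≤ p)
    (hd : p ∣ 11184810) (h24 : 2 ^ 24 ≡ 1 [MOD p])
    (hs : 2 ^ (m % 24) * 509203 ≡ 1 [MOD p]) :
    p ∣ 2 ^ m * (509203 + 11184810 * r) - 1 := by
  have hk : (509203 + 11184810 * r : ℕ) ≡ 509203 [MOD p] := by
    have : (11184810 * r : ℕ) ≡ 0 [MOD p] :=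
      (Nat.modEq_zero_iff_dvd).mpr (hd.mul_right r)
    simpa using (Nat.ModEq.refl 509203).add this
  have hpow : (2 : ℕ) ^ m ≡ 2 ^ (m % 24) [MOD p] := by
    conv_lhs => rw [← Nat.div_add_mod m 24]
    rw [pow_add, pow_mul]
    calc ((2:ℕ) ^ 24) ^ (m / 24) * 2 ^ (m % 24)
        ≡ 1 ^ (m / 24) * 2 ^ (m % 24) [MOD p] := (h24.pow _).mul_right _
      _ = 2 ^ (m % 24) := by ring
  have hmain : (2 : ℕ) ^ m * (509203 + 11184810 * r) ≡ 1 [MOD p] :=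
    ((hpow.mul hk)).trans hs
  have h1 : (1 : ℕ) ≤ 2 ^ m * (509203 + 11184810 * r) :=
    Nat.one_le_iff_ne_zero.mpr (by positivity)
  exact (Nat.modEq_iff_dvd' h1).mp hmain.symm

theorem riesel_composite (r m : ℕ) (hm : 1 ≤ m) :
    ¬ Nat.Prime (2 ^ m * (509203 + 11184810 * r) - 1) := by
  intro hN
  set N := 2 ^ m * (509203 + 11184810 * r) - 1 with hNdef
  have hbig : 1018405 ≤ N := by
    have h2 : 2 ≤ 2 ^ m := by
      calc (2:ℕ) = 2 ^ 1 := rfl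
        _ ≤ 2 ^ m := Nat.pow_le_pow_right (by norm_num) hm
    have : 2 * 509203 ≤ 2 ^ m * (509203 + 11184810 * r) :=
      Nat.mul_le_mul h2 (by omega)
    omega
  have key : ∃ p, 2 ≤ p ∧ p ≤ 241 ∧ p ∣ N := by
    have hlt : m % 24 < 24 := Nat.mod_lt m (by norm_num)
    have hcases : m % 24 = 0 ∨ m % 24 = 1 ∨ m % 24 = 2 ∨ m % 24 = 3 ∨ m % 24 = 4 ∨
        m % 24 = 5 ∨ m % 24 = 6 ∨ m % 24 = 7 ∨ m % 24 = 8 ∨ m % 24 = 9 ∨ m % 24 = 10 ∨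
        m % 24 = 11 ∨ m % 24 = 12 ∨ m % 24 = 13 ∨ m % 24 = 14 ∨ m % 24 = 15 ∨
        m % 24 = 16 ∨ m % 24 = 17 ∨ m % 24 = 18 ∨ m % 24 = 19 ∨ m % 24 = 20 ∨
        m % 24 = 21 ∨ m % 24 = 22 ∨ m % 24 = 23 := by omega
    rcases hcases with h|h|h|h|h|h|h|h|h|h|h|h|h|h|h|h|h|h|h|h|h|h|h|h
    all_goals first
      | (refine ⟨3, by norm_num, by norm_num, riesel_aux r m 3 (by norm_num) (by norm_num)
          (by decide) ?_⟩; rw [h]; decide)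
      | (refine ⟨5, by norm_num, by norm_num, riesel_aux r m 5 (by norm_num) (by norm_num)
          (by decide) ?_⟩; rw [h]; decide)
      | (refine ⟨7, by norm_num, by norm_num, riesel_aux r m 7 (by norm_num) (by norm_num)
          (by decide) ?_⟩; rw [h]; decide)
      | (refine ⟨13, by norm_num, by norm_num, riesel_aux r m 13 (by norm_num) (by norm_num)
          (by decide) ?_⟩; rw [h]; decide)
      | (refine ⟨17, by norm_num, by norm_num, riesel_aux r m 17 (by norm_num) (by norm_num)
          (by decide) ?_⟩; rw [h]; decide)
      | (refine ⟨241, by norm_num, by norm_num, riesel_aux r m 241 (by norm_num) (by norm_num)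
          (by decide) ?_⟩; rw [h]; decide)
  obtain ⟨p, hp2, hp241, hpd⟩ := key
  have := (Nat.Prime.eq_one_or_self_of_dvd hN p hpd)
  omega
end

section
/- Suppose that for each i = 1,...,n, k_i is a positive integer and there exists a Hadamard matrix of order k_i * 2^(⌊ε·log₂ k_i⌋). Then, setting k = k₁·k₂·...·k_n, there exists a Hadamard matrix of order k * 2^m for some non-negative integer m ≤ ε·log₂ k. -/
def IsHadamardMatrix {n : ℕ} (H : Matrix (Fin n) (Fin n) ℝ) : Prop :=
  (∀ i j, H i j = 1 ∨ H i j = -1) ∧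
    H * H.transpose = (n : ℝ) • (1 : Matrix (Fin n) (Fin n) ℝ)

def HadamardOrder (n : ℕ) : Prop :=
  ∃ H : Matrix (Fin n) (Fin n) ℝ, IsHadamardMatrix H

open Matrix Kronecker in
lemma HadamardOrder.mul {a b : ℕ} (ha : HadamardOrder a) (hb : HadamardOrder b) :
    HadamardOrder (a * b) := by
  obtain ⟨H, hH1, hH2⟩ := ha
  obtain ⟨K, hK1, hK2⟩ := hb
  refine ⟨Matrix.reindex finProdFinEquiv finProdFinEquiv (H ⊗ₖ K), ?_, ?_⟩
  · intro i j
    rcases hH1 i.divNat j.divNat with h | h <;>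
      rcases hK1 i.modNat j.modNat with h' | h' <;>
      simp [Matrix.reindex_apply, Matrix.submatrix_apply, Matrix.kroneckerMap_apply, h, h']
  · have : (H ⊗ₖ K) * (H ⊗ₖ K)ᵀ = ((a * b : ℕ) : ℝ) • 1 := by
      rw [← Matrix.kroneckerMap_transpose, ← Matrix.mul_kronecker_mul, hH2, hK2,
        Matrix.smul_kronecker, Matrix.kronecker_smul, Matrix.one_kronecker_one,
        smul_smul, Nat.cast_mul]
    rw [Matrix.reindex_apply, Matrix.transpose_submatrix, Matrix.submatrix_mul_equiv,
      this]
    simp [Matrix.submatrix_smul, Matrix.submatrix_one_equiv]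

lemma HadamardOrder.one : HadamardOrder 1 := by
  refine ⟨Matrix.of fun _ _ => 1, fun i j => Or.inl rfl, ?_⟩
  ext i j
  have : i = j := Subsingleton.elim i j
  subst this
  simp [Matrix.mul_apply, Matrix.one_apply]

lemma HadamardOrder.prod {n : ℕ} (f : Fin n → ℕ) (h : ∀ i, HadamardOrder (f i)) :
    HadamardOrder (∏ i, f i) := by
  induction n with
  | zero => simpa using HadamardOrder.one
  | succ n ih =>
    rw [Fin.prod_univ_succ]
    exact (h 0).mul (ih _ (fun i => h i.succ))

theorem hadamard_product (ε : ℝ) (hε : 0 < ε) (n : ℕ) (k : Fin n → ℕ)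
    (hk : ∀ i, 0 < k i)
    (hH : ∀ i, HadamardOrder (k i * 2 ^ ⌊ε * Real.logb 2 (k i)⌋₊)) :
    ∃ m : ℕ, (m : ℝ) ≤ ε * Real.logb 2 (∏ i, k i) ∧
      HadamardOrder ((∏ i, k i) * 2 ^ m) := by
  refine ⟨∑ i, ⌊ε * Real.logb 2 (k i)⌋₊, ?_, ?_⟩
  · have hlog : Real.logb 2 (∏ i, k i) = ∑ i, Real.logb 2 (k i) := by
      rw [Real.logb_prod]
      intro i _
      exact_mod_cast (hk i).ne'
    rw [hlog, Finset.mul_sum, Nat.cast_sum]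
    refine Finset.sum_le_sum fun i _ => ?_
    refine Nat.floor_le ?_
    have h1 : (0:ℝ) ≤ Real.logb 2 (k i) := by
      apply Real.logb_nonneg one_lt_two
      exact_mod_cast hk i
    positivity
  · have := HadamardOrder.prod (fun i => k i * 2 ^ ⌊ε * Real.logb 2 (k i)⌋₊) hH
    rwa [Finset.prod_mul_distrib, Finset.prod_pow_eq_pow_sum] at this
end

section
/- If p is an odd prime, then there exists a Hadamard matrix of order 2^m(p+1) for some non-negative integer m, where m ≥ 1 if p ≡ 1 (mod 4) and m ≥ 0 if p ≡ 3 (mod 4). In particular, for every odd prime p there is a Hadamard matrix of order 4(p+1) obtained by multiplying by further powers of 2. -/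
lemma hadamardOrder_of {I : Type} [Fintype I] [DecidableEq I] (H : Matrix I I ℝ)
    (h1 : ∀ i j, H i j = 1 ∨ H i j = -1)
    (h2 : H * H.transpose = (Fintype.card I : ℝ) • 1) {n : ℕ}
    (hn : Fintype.card I = n) : HadamardOrder n := by
  have e : Fin n ≃ I := (Fintype.equivFinOfCardEq hn).symm
  refine ⟨H.submatrix e e, fun i j => h1 _ _, ?_⟩
  rw [Matrix.transpose_submatrix, Matrix.submatrix_mul_equiv, h2]
  ext i j
  simp [Matrix.submatrix_apply, Matrix.one_apply, Equiv.apply_eq_iff_eq, hn]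


open Finset

section Char

variable {p : ℕ} [Fact p.Prime]

/-- real-valued quadratic character -/
noncomputable def chiR (p : ℕ) [Fact p.Prime] (x : ZMod p) : ℝ :=
  ((quadraticChar (ZMod p) x : ℤ) : ℝ)

lemma chiR_zero : chiR p 0 = 0 := by simp [chiR]

lemma chiR_pm {x : ZMod p} (hx : x ≠ 0) : chiR p x = 1 ∨ chiR p x = -1 := by
  rcases quadraticChar_dichotomy hx with h | h <;> [left; right] <;> simp [chiR, h]

lemma char_ne_two' (hp2 : p ≠ 2) : ringChar (ZMod p) ≠ 2 := by
  rw [ZMod.ringChar_zmod_n]; exact hp2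

lemma chiR_neg_of_three (h3 : p % 4 = 3) (x : ZMod p) : chiR p (-x) = - chiR p x := by
  have hns : ¬ IsSquare (-1 : ZMod p) := by
    rw [ZMod.exists_sq_eq_neg_one_iff]; simp [h3]
  have h1 : quadraticChar (ZMod p) (-1) = -1 :=
    quadraticChar_neg_one_iff_not_isSquare.mpr hns
  have : (-x) = (-1) * x := by ring
  rw [this]
  simp only [chiR, map_mul, h1]
  push_cast
  ring

lemma chiR_neg_of_one (h1 : p % 4 = 1) (x : ZMod p) : chiR p (-x) = chiR p x := by
  have hp2 : p ≠ 2 := by omega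
  have hs : IsSquare (-1 : ZMod p) := by
    rw [ZMod.exists_sq_eq_neg_one_iff]; omega
  have hne : (-1 : ZMod p) ≠ 0 := by
    intro h
    have : (1 : ZMod p) = 0 := by linear_combination -h
    exact one_ne_zero this
  have h1' : quadraticChar (ZMod p) (-1) = 1 :=
    (quadraticChar_one_iff_isSquare hne).mpr hs
  have : (-x) = (-1) * x := by ring
  rw [this]
  simp only [chiR, map_mul, h1']
  push_cast
  ring

lemma conv_sum (hp2 : p ≠ 2) (b : ZMod p) (hb : b ≠ 0) :
    ∑ x : ZMod p, (quadraticChar (ZMod p) x : ℤ) * quadraticChar (ZMod p) (x + b) = -1 := by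
  classical
  have h0 : ∑ x : ZMod p, (quadraticChar (ZMod p) x : ℤ) * quadraticChar (ZMod p) (x + b)
      = ∑ x ∈ univ.erase 0, (quadraticChar (ZMod p) x : ℤ) * quadraticChar (ZMod p) (x + b) := by
    rw [Finset.sum_erase_eq_sub (mem_univ 0)]
    simp
  rw [h0]
  have step : ∀ x ∈ univ.erase (0 : ZMod p),
      (quadraticChar (ZMod p) x : ℤ) * quadraticChar (ZMod p) (x + b)
        = quadraticChar (ZMod p) (1 + b * x⁻¹) := by
    intro x hx
    have hx0 : x ≠ 0 := (Finset.mem_erase.1 hx).1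
    have hxb : x + b = x * (1 + b * x⁻¹) := by
      field_simp
    rw [hxb, map_mul, ← mul_assoc, ← pow_two, quadraticChar_sq_one hx0, one_mul]
  rw [Finset.sum_congr rfl step]
  have himg : ∑ x ∈ univ.erase (0 : ZMod p), (quadraticChar (ZMod p) (1 + b * x⁻¹) : ℤ)
      = ∑ y ∈ univ.erase (1 : ZMod p), (quadraticChar (ZMod p) y : ℤ) := by
    apply Finset.sum_nbij' (fun x => 1 + b * x⁻¹) (fun y => b * (y - 1)⁻¹)
    · intro x hx
      have hx0 : x ≠ 0 := (Finset.mem_erase.1 hx).1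
      simp only [Finset.mem_erase, Finset.mem_univ, and_true]
      intro h
      have : b * x⁻¹ = 0 := by linear_combination h
      rcases mul_eq_zero.1 this with h' | h'
      · exact hb h'
      · exact hx0 (inv_eq_zero.1 h')
    · intro y hy
      have hy1 : y ≠ 1 := (Finset.mem_erase.1 hy).1
      simp only [Finset.mem_erase, Finset.mem_univ, and_true]
      intro h
      rcases mul_eq_zero.1 h with h' | h'
      · exact hb h'
      · exact hy1 (by have := inv_eq_zero.1 h'; linear_combination this)
    · intro x hx
      have hx0 : x ≠ 0 := (Finset.mem_erase.1 hx).1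
      have hb' : (1 : ZMod p) + b * x⁻¹ - 1 = b * x⁻¹ := by ring
      rw [hb']
      rw [mul_inv_rev, inv_inv]
      field_simp
    · intro y hy
      have hy1 : y ≠ 1 := (Finset.mem_erase.1 hy).1
      have h1 : y - 1 ≠ 0 := sub_ne_zero.2 hy1
      rw [mul_inv_rev, inv_inv]
      field_simp
      ring
    · intro x hx
      rfl
  rw [himg, Finset.sum_erase_eq_sub (mem_univ 1)]
  have := quadraticChar_sum_zero (char_ne_two' hp2)
  push_cast at this ⊢
  rw [this]
  simp

lemma convR (hp2 : p ≠ 2) (a b : ZMod p) (hab : a ≠ b) :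
    ∑ c : ZMod p, chiR p (a - c) * chiR p (b - c) = -1 := by
  have key := conv_sum hp2 (b - a) (sub_ne_zero.2 (Ne.symm hab))
  have : ∑ c : ZMod p, chiR p (a - c) * chiR p (b - c)
      = ∑ x : ZMod p,
        ((quadraticChar (ZMod p) x : ℤ) : ℝ) * ((quadraticChar (ZMod p) (x + (b - a)) : ℤ) : ℝ) := by
    refine Fintype.sum_equiv (Equiv.subLeft a) _ _ fun c => ?_
    simp only [Equiv.subLeft_apply, chiR]
    have e1 : a - c + (b - a) = b - c := by ring
    rw [e1]
  rw [this]
  exact_mod_cast congrArg (fun z : ℤ => (z : ℝ)) key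

lemma diagR (a : ZMod p) : ∑ c : ZMod p, chiR p (a - c) * chiR p (a - c) = (p : ℝ) - 1 := by
  classical
  rw [← Finset.sum_erase_add _ _ (mem_univ a)]
  have hstep : ∀ c ∈ univ.erase a, chiR p (a - c) * chiR p (a - c) = 1 := by
    intro c hc
    have : a - c ≠ 0 := sub_ne_zero.2 (Ne.symm (Finset.mem_erase.1 hc).1)
    rcases chiR_pm this with h | h <;> rw [h] <;> norm_num
  rw [Finset.sum_congr rfl hstep, Finset.sum_const]
  have hp1 : 1 ≤ p := (Fact.out : p.Prime).one_le
  simp only [sub_self, chiR_zero, mul_zero, add_zero, nsmul_eq_mul, mul_one,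
    Finset.card_erase_of_mem (mem_univ _), Finset.card_univ, ZMod.card]
  push_cast [hp1]
  ring

lemma shiftR (hp2 : p ≠ 2) (a : ZMod p) : ∑ c : ZMod p, chiR p (a - c) = 0 := by
  have h := quadraticChar_sum_zero (char_ne_two' hp2)
  have : ∑ c : ZMod p, chiR p (a - c) = ∑ x : ZMod p, ((quadraticChar (ZMod p) x : ℤ) : ℝ) := by
    exact Fintype.sum_equiv (Equiv.subLeft a) _ _ fun c => rfl
  rw [this]
  exact_mod_cast congrArg (fun z : ℤ => (z : ℝ)) h

lemma shiftR' (hp2 : p ≠ 2) (a : ZMod p) : ∑ c : ZMod p, chiR p (c - a) = 0 := by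
  have : ∑ c : ZMod p, chiR p (c - a) = ∑ x : ZMod p, ((quadraticChar (ZMod p) x : ℤ) : ℝ) := by
    refine Fintype.sum_equiv (Equiv.subRight a) _ _ fun c => ?_
    simp [chiR]
  rw [this]
  exact_mod_cast congrArg (fun z : ℤ => (z : ℝ)) (quadraticChar_sum_zero (char_ne_two' hp2))

end Char

section PaleyI

variable {p : ℕ} [Fact p.Prime]

/-- The Paley type I matrix of order p+1 -/
noncomputable def PI (p : ℕ) [Fact p.Prime] :
    Matrix (Option (ZMod p)) (Option (ZMod p)) ℝ :=
  fun i j =>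
    match i, j with
    | none, none => 1
    | none, some _ => 1
    | some _, none => -1
    | some a, some b => chiR p (a - b) + if a = b then 1 else 0

lemma PI_entries (i j : Option (ZMod p)) : PI p i j = 1 ∨ PI p i j = -1 := by
  match i, j with
  | none, none => left; rfl
  | none, some b => left; rfl
  | some a, none => right; rfl
  | some a, some b =>
    by_cases h : a = b
    · left; simp [PI, h, chiR_zero]
    · rcases chiR_pm (sub_ne_zero.2 h) with h' | h' <;> [left; right] <;>
        simp [PI, h, h']

lemma PI_mul (hp2 : p ≠ 2) (h3 : p % 4 = 3) :
    PI p * (PI p).transpose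
      = ((Fintype.card (Option (ZMod p))) : ℝ) • 1 := by
  have hcard : Fintype.card (Option (ZMod p)) = p + 1 := by
    simp [ZMod.card]
  rw [hcard]
  ext i j
  match i, j with
  | none, none =>
    simp only [Matrix.mul_apply, Matrix.transpose_apply, Fintype.sum_option, PI,
      Matrix.smul_apply, Matrix.one_apply_eq, smul_eq_mul, mul_one]
    rw [Finset.sum_const]
    simp only [Finset.card_univ, ZMod.card, nsmul_eq_mul, mul_one]
    push_cast
    ring
  | none, some b =>
    simp only [Matrix.mul_apply, Matrix.transpose_apply, Fintype.sum_option, PI,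
      Matrix.smul_apply, Matrix.one_apply, smul_eq_mul]
    rw [Finset.sum_congr rfl (fun c (_ : c ∈ univ) => (one_mul _ : (1:ℝ) * _ = _))]
    rw [Finset.sum_add_distrib, shiftR hp2 b, Finset.sum_ite_eq univ b (fun _ => (1:ℝ))]
    simp
  | some a, none =>
    simp only [Matrix.mul_apply, Matrix.transpose_apply, Fintype.sum_option, PI,
      Matrix.smul_apply, Matrix.one_apply, smul_eq_mul]
    rw [Finset.sum_congr rfl (fun c (_ : c ∈ univ) => (mul_one _ : _ * (1:ℝ) = _))]
    rw [Finset.sum_add_distrib, shiftR hp2 a, Finset.sum_ite_eq univ a (fun _ => (1:ℝ))]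
    simp
  | some a, some b =>
    simp only [Matrix.mul_apply, Matrix.transpose_apply, Fintype.sum_option, PI,
      Matrix.smul_apply, Matrix.one_apply, smul_eq_mul]
    have expand : ∀ c : ZMod p,
        (chiR p (a - c) + if a = c then (1:ℝ) else 0) *
          (chiR p (b - c) + if b = c then (1:ℝ) else 0)
        = chiR p (a - c) * chiR p (b - c) + (if a = c then chiR p (b - c) else 0)
          + (if b = c then chiR p (a - c) else 0)
          + (if a = c then (if b = c then (1:ℝ) else 0) else 0) := by
      intro c
      by_cases h1 : a = c <;> by_cases h2 : b = c <;>
        simp [h1, h2, chiR_zero] <;> ring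
    rw [Finset.sum_congr rfl (fun c _ => expand c)]
    rw [Finset.sum_add_distrib, Finset.sum_add_distrib, Finset.sum_add_distrib,
      Finset.sum_ite_eq univ a, Finset.sum_ite_eq univ b, Finset.sum_ite_eq univ a]
    by_cases h : a = b
    · subst h
      rw [diagR]
      simp [chiR_zero]
      push_cast
      ring
    · rw [convR hp2 a b h]
      have hba : chiR p (b - a) = - chiR p (a - b) := by
        rw [show b - a = -(a - b) by ring, chiR_neg_of_three h3]
      simp only [mem_univ, if_true, hba, h, if_neg h, if_neg (Ne.symm h)]
      have : (some a ≠ some b) := by simpa using h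
      simp only [Matrix.one_apply, if_neg this, mul_zero]
      ring

end PaleyI

section PaleyII

lemma addmix {M : Type*} [AddCommMonoid M] (a b c d : M) (h : b + c = 0) :
    a + b + (c + d) = a + d := by
  rw [add_assoc a b, ← add_assoc b c d, h, zero_add]

/-- second 2×2 block matrix -/
noncomputable def Lmat : Matrix Bool Bool ℝ := fun x y => if x || y then -1 else 1

noncomputable def Kmat : Matrix Bool Bool ℝ := fun x y => if x && y then -1 else 1

lemma Kmat_entries (x y : Bool) : Kmat x y = 1 ∨ Kmat x y = -1 := by
  cases x <;> cases y <;> simp [Kmat]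

lemma Lmat_entries (x y : Bool) : Lmat x y = 1 ∨ Lmat x y = -1 := by
  cases x <;> cases y <;> simp [Lmat]

lemma Kmat_mul : Kmat * Kmat.transpose = (2 : ℝ) • 1 := by
  ext x y
  cases x <;> cases y <;>
    simp [Matrix.mul_apply, Fintype.sum_bool, Kmat, Matrix.one_apply] <;> norm_num

lemma Lmat_mul : Lmat * Lmat.transpose = (2 : ℝ) • 1 := by
  ext x y
  cases x <;> cases y <;>
    simp [Matrix.mul_apply, Fintype.sum_bool, Lmat, Matrix.one_apply] <;> norm_num

lemma KL_anti : Kmat * Lmat.transpose + Lmat * Kmat.transpose = 0 := by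
  ext x y
  cases x <;> cases y <;>
    simp [Matrix.mul_apply, Fintype.sum_bool, Kmat, Lmat, Matrix.add_apply] <;> norm_num

variable {p : ℕ} [Fact p.Prime]

/-- The Paley conference matrix of order p+1 -/
noncomputable def CM (p : ℕ) [Fact p.Prime] :
    Matrix (Option (ZMod p)) (Option (ZMod p)) ℝ :=
  fun i j =>
    match i, j with
    | none, none => 0
    | none, some _ => 1
    | some _, none => 1
    | some a, some b => chiR p (a - b)

lemma CM_diag (i : Option (ZMod p)) : CM p i i = 0 := by
  match i with
  | none => rfl
  | some a => simp [CM, chiR_zero]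

lemma CM_offdiag {i j : Option (ZMod p)} (h : i ≠ j) : CM p i j = 1 ∨ CM p i j = -1 := by
  match i, j with
  | none, none => exact absurd rfl h
  | none, some b => left; rfl
  | some a, none => left; rfl
  | some a, some b =>
    exact chiR_pm (sub_ne_zero.2 (by simpa using h))

lemma CM_symm (h1 : p % 4 = 1) : (CM p).transpose = CM p := by
  ext i j
  match i, j with
  | none, none => rfl
  | none, some b => rfl
  | some a, none => rfl
  | some a, some b =>
    show CM p (some b) (some a) = CM p (some a) (some b)
    simp only [CM]
    rw [show b - a = -(a - b) by ring, chiR_neg_of_one h1]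

lemma CM_mul (hp2 : p ≠ 2) : CM p * (CM p).transpose = ((p : ℕ) : ℝ) • 1 := by
  ext i j
  match i, j with
  | none, none =>
    simp only [Matrix.mul_apply, Matrix.transpose_apply, Fintype.sum_option, CM,
      Matrix.smul_apply, Matrix.one_apply_eq, smul_eq_mul, mul_one]
    simp [Finset.sum_const, ZMod.card]
  | none, some b =>
    simp only [Matrix.mul_apply, Matrix.transpose_apply, Fintype.sum_option, CM,
      Matrix.smul_apply, Matrix.one_apply, smul_eq_mul]
    rw [Finset.sum_congr rfl (fun c (_ : c ∈ univ) => (one_mul _ : (1:ℝ) * _ = _))]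
    rw [shiftR hp2 b]
    simp
  | some a, none =>
    simp only [Matrix.mul_apply, Matrix.transpose_apply, Fintype.sum_option, CM,
      Matrix.smul_apply, Matrix.one_apply, smul_eq_mul]
    rw [Finset.sum_congr rfl (fun c (_ : c ∈ univ) => (mul_one _ : _ * (1:ℝ) = _))]
    rw [shiftR hp2 a]
    simp
  | some a, some b =>
    simp only [Matrix.mul_apply, Matrix.transpose_apply, Fintype.sum_option, CM,
      Matrix.smul_apply, Matrix.one_apply, smul_eq_mul]
    by_cases h : a = b
    · subst h
      rw [diagR]
      simp
    · rw [convR hp2 a b h]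
      simp [h]

/-- The Paley type II matrix of order 2(p+1) -/
noncomputable def PII (p : ℕ) [Fact p.Prime] :
    Matrix (Option (ZMod p) × Bool) (Option (ZMod p) × Bool) ℝ :=
  Matrix.kroneckerMap (· * ·) (CM p) Kmat + Matrix.kroneckerMap (· * ·) 1 Lmat

lemma PII_entries (i j : Option (ZMod p) × Bool) : PII p i j = 1 ∨ PII p i j = -1 := by
  rcases i with ⟨i, x⟩
  rcases j with ⟨j, y⟩
  by_cases h : i = j
  · subst h
    have : PII p (i, x) (i, y) = Lmat x y := by
      simp [PII, Matrix.add_apply, Matrix.kroneckerMap_apply, CM_diag, Matrix.one_apply]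
    rw [this]
    exact Lmat_entries x y
  · have : PII p (i, x) (j, y) = CM p i j * Kmat x y := by
      simp [PII, Matrix.add_apply, Matrix.kroneckerMap_apply, Matrix.one_apply, if_neg h]
    rw [this]
    rcases CM_offdiag h with h' | h' <;> rcases Kmat_entries x y with h'' | h'' <;>
      rw [h', h''] <;> norm_num
  
lemma PII_mul (hp2 : p ≠ 2) (h1 : p % 4 = 1) :
    PII p * (PII p).transpose
      = ((Fintype.card (Option (ZMod p) × Bool)) : ℝ) • 1 := by
  have hcard : Fintype.card (Option (ZMod p) × Bool) = 2 * (p + 1) := by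
    simp [ZMod.card]
    ring
  rw [hcard]
  rw [PII, Matrix.transpose_add, ← Matrix.kroneckerMap_transpose,
    ← Matrix.kroneckerMap_transpose, Matrix.transpose_one]
  rw [add_mul, mul_add, mul_add, ← Matrix.mul_kronecker_mul, ← Matrix.mul_kronecker_mul,
    ← Matrix.mul_kronecker_mul, ← Matrix.mul_kronecker_mul, CM_mul hp2, Kmat_mul,
    Matrix.mul_one, Matrix.one_mul, Lmat_mul, Matrix.one_mul]
  have hmid : Matrix.kroneckerMap (· * ·) (CM p) (Kmat * Lmat.transpose)
      + Matrix.kroneckerMap (· * ·) (CM p).transpose (Lmat * Kmat.transpose) = 0 := by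
    rw [CM_symm h1, ← Matrix.kronecker_add, KL_anti, Matrix.kronecker_zero]
  rw [addmix _ _ _ _ hmid, Matrix.smul_kronecker, Matrix.kronecker_smul,
    Matrix.one_kronecker_one, smul_smul]
  rw [show ((p : ℝ) * 2) • (1 : Matrix (Option (ZMod p) × Bool) (Option (ZMod p) × Bool) ℝ)
      + (2 : ℝ) • 1 = ((p : ℝ) * 2 + 2) • 1 from (add_smul _ _ _).symm]
  congr 1
  push_cast
  ring

end PaleyII

lemma hadamardOrder_double {n : ℕ} (h : HadamardOrder n) : HadamardOrder (2 * n) := by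
  obtain ⟨H, h1, h2⟩ := h
  refine hadamardOrder_of (Matrix.kroneckerMap (· * ·) Kmat H) (fun i j => ?_) ?_ ?_
  · rcases Kmat_entries i.1 j.1 with h | h <;> rcases h1 i.2 j.2 with h' | h' <;>
      simp [Matrix.kroneckerMap_apply, h, h']
  · have key := (Matrix.mul_kronecker_mul Kmat Kmat.transpose H H.transpose).symm
    rw [show (Matrix.kroneckerMap (· * ·) Kmat H).transpose
        = Matrix.kroneckerMap (· * ·) Kmat.transpose H.transpose from rfl]
    show Matrix.kroneckerMap (· * ·) Kmat H * Matrix.kroneckerMap (· * ·) Kmat.transpose H.transpose = _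
    rw [key, h2, Kmat_mul, Matrix.smul_kronecker, Matrix.kronecker_smul,
      Matrix.one_kronecker_one, Fintype.card_prod, Fintype.card_bool, Fintype.card_fin,
      smul_smul]
    push_cast
    ring_nf
  · simp [Fintype.card_prod]

theorem paley_hadamard (p : ℕ) (hp : p.Prime) (hodd : Odd p) :
    (∃ m : ℕ, (p % 4 = 1 → 1 ≤ m) ∧ HadamardOrder (2 ^ m * (p + 1))) ∧
      HadamardOrder (4 * (p + 1)) := by
  haveI := Fact.mk hp
  have hp2 : p ≠ 2 := by
    rintro rfl
    exact (by norm_num : ¬ Odd 2) hodd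
  have hmod : p % 4 = 1 ∨ p % 4 = 3 := by
    have := Nat.odd_iff.mp hodd
    omega
  rcases hmod with h1 | h3
  · have base : HadamardOrder (2 * (p + 1)) :=
      hadamardOrder_of (PII p) PII_entries (PII_mul hp2 h1)
        (by simp [ZMod.card]; ring)
    refine ⟨⟨1, fun _ => le_refl 1, by simpa [pow_one] using base⟩, ?_⟩
    have h := hadamardOrder_double base
    have e : 4 * (p + 1) = 2 * (2 * (p + 1)) := by ring
    rwa [e]
  · have base : HadamardOrder (p + 1) :=
      hadamardOrder_of (PI p) PI_entries (PI_mul hp2 h3)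
        (by simp [ZMod.card])
    refine ⟨⟨0, fun h => by omega, by simpa using base⟩, ?_⟩
    have h := hadamardOrder_double (hadamardOrder_double base)
    have e : 4 * (p + 1) = 2 * (2 * (p + 1)) := by ring
    rwa [e]
end
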